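/- Let ρ : ℝ → ℝ be four times continuously differentiable and even (ρ(−u) = ρ(u) for all u), and define r : [0,∞) → ℝ by r(t) = ρ(√t). Then r is differentiable at 0 from the right with r'(0) = ρ''(0)/2; moreover, the function r' (equal to ρ'(√t)/(2√t) for t > 0 and to ρ''(0)/2 at t = 0) is differentiable at 0 from the right with derivative ρ''''(0)/12. -/

import Mathlib

open Filter Set Real
open scoped Topology

/-- For `ρ` even and `C⁴`, the function `r(t) = ρ(√t)` has right derivative
`ρ''(0)/2` at `0`, and its derivative function (extended by this value at `0`)
has right derivative `ρ''''(0)/12` at `0`. -/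
theorem radial_reparametrization_smooth_at_zero (ρ : ℝ → ℝ)
    (hρ : ContDiff ℝ 4 ρ) (heven : ∀ u : ℝ, ρ (-u) = ρ u) :
    HasDerivWithinAt (fun t => ρ (Real.sqrt t)) (deriv (deriv ρ) 0 / 2)
      (Set.Ici 0) 0 ∧
    HasDerivWithinAt
      (fun t => if t = 0 then deriv (deriv ρ) 0 / 2
        else deriv ρ (Real.sqrt t) / (2 * Real.sqrt t))
      (deriv (deriv (deriv (deriv ρ))) 0 / 12) (Set.Ici 0) 0 := by
  set D1 := deriv ρ with hD1
  set D2 := deriv D1 with hD2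
  set D3 := deriv D2 with hD3
  set D4 := deriv D3 with hD4
  have c3 : ContDiff ℝ 3 D1 :=
    (contDiff_succ_iff_deriv.mp (show ContDiff ℝ (3 + 1) ρ from hρ)).2.2
  have c2 : ContDiff ℝ 2 D2 :=
    (contDiff_succ_iff_deriv.mp (show ContDiff ℝ (2 + 1) D1 from c3)).2.2
  have c1 : ContDiff ℝ 1 D3 :=
    (contDiff_succ_iff_deriv.mp (show ContDiff ℝ (1 + 1) D2 from c2)).2.2
  have d0 : Differentiable ℝ ρ := hρ.differentiable (by norm_num)
  have d1 : Differentiable ℝ D1 := c3.differentiable (by norm_num)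
  have d2 : Differentiable ℝ D2 := c2.differentiable (by norm_num)
  have d3 : Differentiable ℝ D3 := c1.differentiable (by norm_num)
  have hodd1 : ∀ u : ℝ, D1 (-u) = -D1 u := by
    intro u
    have h : (fun x : ℝ => ρ (-x)) = ρ := funext heven
    have h2 := deriv_comp_neg (f := ρ) (x := u)
    rw [h] at h2
    linarith
  have heven2 : ∀ u : ℝ, D2 (-u) = D2 u := by
    intro u
    have h : (fun x : ℝ => D1 (-x)) = fun x => -D1 x := funext hodd1
    have h2 := deriv_comp_neg (f := D1) (x := u)
    rw [h] at h2
    have h3 : deriv (fun x => -D1 x) u = -D2 u := by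
      rw [deriv.fun_neg]
    rw [h3] at h2
    linarith
  have hodd3 : ∀ u : ℝ, D3 (-u) = -D3 u := by
    intro u
    have h : (fun x : ℝ => D2 (-x)) = D2 := funext heven2
    have h2 := deriv_comp_neg (f := D2) (x := u)
    rw [h] at h2
    linarith
  have hD10 : D1 0 = 0 := by have := hodd1 0; simp at this; linarith
  have hD30 : D3 0 = 0 := by have := hodd3 0; simp at this; linarith
  have hle : 𝓝[>] (0 : ℝ) ≤ 𝓝[≠] (0 : ℝ) :=
    nhdsWithin_mono 0 (fun x hx => ne_of_gt hx)
  have limD2 : Tendsto (fun x => D1 x / x) (𝓝[>] (0 : ℝ)) (𝓝 (D2 0)) := by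
    have h := hasDerivAt_iff_tendsto_slope.mp (d1 0).hasDerivAt
    have h2 := h.mono_left hle
    refine h2.congr' ?_
    filter_upwards [self_mem_nhdsWithin] with x hx
    simp [slope_def_field, hD10]
  have limD4 : Tendsto (fun x => D3 x / x) (𝓝[>] (0 : ℝ)) (𝓝 (D4 0)) := by
    have h := hasDerivAt_iff_tendsto_slope.mp (d3 0).hasDerivAt
    have h2 := h.mono_left hle
    refine h2.congr' ?_
    filter_upwards [self_mem_nhdsWithin] with x hx
    simp [slope_def_field, hD30]
  have hsq : Tendsto Real.sqrt (𝓝[>] (0 : ℝ)) (𝓝[>] (0 : ℝ)) := by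
    rw [tendsto_nhdsWithin_iff]
    constructor
    · have : Tendsto Real.sqrt (𝓝 (0:ℝ)) (𝓝 (Real.sqrt 0)) :=
        Real.continuous_sqrt.tendsto 0
      simpa using this.mono_left nhdsWithin_le_nhds
    · filter_upwards [self_mem_nhdsWithin] with x hx
      exact Real.sqrt_pos.mpr hx
  have hIci : Set.Ici (0:ℝ) \ {0} = Set.Ioi (0:ℝ) := Set.Ici_sdiff_left
  have hF : Tendsto (fun x => (ρ x - ρ 0) / x ^ 2) (𝓝[>] (0:ℝ)) (𝓝 (D2 0 / 2)) := by
    apply HasDerivAt.lhopital_zero_nhdsGT (f' := fun x => D1 x) (g' := fun x => 2 * x)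
    · filter_upwards with x
      exact (d0 x).hasDerivAt.sub_const (ρ 0)
    · filter_upwards with x
      have := hasDerivAt_pow 2 x
      simpa using this
    · filter_upwards [self_mem_nhdsWithin] with x hx
      have hx0 : (0:ℝ) < x := hx
      positivity
    · have : Tendsto (fun x => ρ x - ρ 0) (𝓝 (0:ℝ)) (𝓝 (ρ 0 - ρ 0)) :=
        ((d0.continuous.tendsto 0).sub tendsto_const_nhds)
      simpa using this.mono_left nhdsWithin_le_nhds
    · have : Tendsto (fun x : ℝ => x ^ 2) (𝓝 (0:ℝ)) (𝓝 ((0:ℝ) ^ 2)) :=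
        (continuous_pow 2).tendsto 0
      simpa using this.mono_left nhdsWithin_le_nhds
    · have h2 := limD2.div_const 2
      refine h2.congr' ?_
      filter_upwards [self_mem_nhdsWithin] with x hx
      rw [div_div, mul_comm]
  have part1 : HasDerivWithinAt (fun t => ρ (Real.sqrt t)) (D2 0 / 2) (Set.Ici 0) 0 := by
    rw [hasDerivWithinAt_iff_tendsto_slope, hIci]
    have h := hF.comp hsq
    refine h.congr' ?_
    filter_upwards [self_mem_nhdsWithin] with t ht
    have ht' : (0:ℝ) < t := ht
    simp only [Function.comp, slope_def_field]
    rw [Real.sq_sqrt ht'.le]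
    simp [Real.sqrt_zero]
  refine ⟨part1, ?_⟩
  have hstepB : Tendsto (fun x => (D2 x - D2 0) / (6 * x ^ 2)) (𝓝[>] (0:ℝ))
      (𝓝 (D4 0 / 12)) := by
    apply HasDerivAt.lhopital_zero_nhdsGT (f' := fun x => D3 x) (g' := fun x => 12 * x)
    · filter_upwards with x
      exact (d2 x).hasDerivAt.sub_const (D2 0)
    · filter_upwards with x
      have : HasDerivAt (fun y : ℝ => 6 * y ^ 2) (6 * (((2:ℕ):ℝ) * x ^ (2 - 1))) x :=
        (hasDerivAt_pow 2 x).const_mul (6:ℝ)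
      convert this using 1
      ring
    · filter_upwards [self_mem_nhdsWithin] with x hx
      have hx0 : (0:ℝ) < x := hx
      positivity
    · have : Tendsto (fun x => D2 x - D2 0) (𝓝 (0:ℝ)) (𝓝 (D2 0 - D2 0)) :=
        ((d2.continuous.tendsto 0).sub tendsto_const_nhds)
      simpa using this.mono_left nhdsWithin_le_nhds
    · have : Tendsto (fun x : ℝ => 6 * x ^ 2) (𝓝 (0:ℝ)) (𝓝 (6 * (0:ℝ) ^ 2)) :=
        (continuous_const.mul (continuous_pow 2)).tendsto 0
      simpa using this.mono_left nhdsWithin_le_nhds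
    · have h2 := limD4.div_const 12
      refine h2.congr' ?_
      filter_upwards [self_mem_nhdsWithin] with x hx
      rw [div_div, mul_comm]
  have hG : Tendsto (fun x => (D1 x - D2 0 * x) / (2 * x ^ 3)) (𝓝[>] (0:ℝ))
      (𝓝 (D4 0 / 12)) := by
    apply HasDerivAt.lhopital_zero_nhdsGT (f' := fun x => D2 x - D2 0)
      (g' := fun x => 6 * x ^ 2)
    · filter_upwards with x
      have hlin : HasDerivAt (fun y : ℝ => D2 0 * y) (D2 0) x := by
        simpa using (hasDerivAt_id x).const_mul (D2 0)
      exact (d1 x).hasDerivAt.sub hlin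
    · filter_upwards with x
      have : HasDerivAt (fun y : ℝ => 2 * y ^ 3) (2 * (((3:ℕ):ℝ) * x ^ (3 - 1))) x :=
        (hasDerivAt_pow 3 x).const_mul (2:ℝ)
      convert this using 1
      push_cast
      ring
    · filter_upwards [self_mem_nhdsWithin] with x hx
      have hx0 : (0:ℝ) < x := hx
      positivity
    · have : Tendsto (fun x => D1 x - D2 0 * x) (𝓝 (0:ℝ)) (𝓝 (D1 0 - D2 0 * 0)) :=
        ((d1.continuous.tendsto 0).sub (tendsto_const_nhds.mul tendsto_id))
      rw [hD10] at this
      simpa using this.mono_left nhdsWithin_le_nhds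
    · have : Tendsto (fun x : ℝ => 2 * x ^ 3) (𝓝 (0:ℝ)) (𝓝 (2 * (0:ℝ) ^ 3)) :=
        (continuous_const.mul (continuous_pow 3)).tendsto 0
      simpa using this.mono_left nhdsWithin_le_nhds
    · exact hstepB
  rw [hasDerivWithinAt_iff_tendsto_slope, hIci]
  have h := hG.comp hsq
  refine h.congr' ?_
  filter_upwards [self_mem_nhdsWithin] with t ht
  have ht' : (0:ℝ) < t := ht
  have hs : Real.sqrt t > 0 := Real.sqrt_pos.mpr ht'
  have hts : Real.sqrt t ^ 2 = t := Real.sq_sqrt ht'.le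
  simp only [Function.comp, slope_def_field, if_true]
  set x := Real.sqrt t with hxdef
  rw [sub_zero, ← hts]
  have hx0 : x ≠ 0 := ne_of_gt hs
  rw [if_neg (pow_ne_zero 2 hx0)]
  field_simp
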